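/- arXiv:1807.08960 — 3 statements merged into one kernel-verified Lean document; each statement's English description precedes it below -/
import Mathlib

section
/- Define f : ℝ → ℝ by f(x) = 3 − x²/2 for 0 ≤ x ≤ 1, f(x) = (20 − 4x − x²)/6 for 1 ≤ x ≤ 14/5, and f(x) = 4(3−x)² for 14/5 ≤ x ≤ 3. Then (1/3)·∫₀³ f(x) dx ≤ 9/5. -/
open MeasureTheory intervalIntegral

lemma II_aux (a b : ℝ) (hab : a ≤ b) (f g : ℝ → ℝ) (hg : Continuous g)
    (h : ∀ x ∈ Set.Icc a b, f x = g x) : IntervalIntegrable f volume a b := by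
  rw [intervalIntegrable_iff_integrableOn_Ioc_of_le hab]
  exact (hg.integrableOn_Ioc).congr_fun
    (fun x hx => (h x (Set.Ioc_subset_Icc_self hx)).symm) measurableSet_Ioc

lemma poly_int (a b : ℝ) (F f : ℝ → ℝ)
    (hd : ∀ x ∈ Set.uIcc a b, HasDerivAt F (f x) x) (hc : Continuous f) :
    ∫ x in a..b, f x = F b - F a :=
  integral_eq_sub_of_hasDerivAt hd (hc.intervalIntegrable (μ := volume) a b)

theorem stmt_7 (f : ℝ → ℝ)
    (h1 : ∀ x : ℝ, 0 ≤ x → x ≤ 1 → f x = 3 - x^2/2)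
    (h2 : ∀ x : ℝ, 1 ≤ x → x ≤ 14/5 → f x = (20 - 4*x - x^2) / 6)
    (h3 : ∀ x : ℝ, 14/5 ≤ x → x ≤ 3 → f x = 4*(3 - x)^2) :
    (1/3 : ℝ) * ∫ x in (0:ℝ)..3, f x ≤ 9/5 := by
  have i1 : IntervalIntegrable f volume 0 1 :=
    II_aux 0 1 (by norm_num) f _ (by fun_prop) (fun x hx => h1 x hx.1 hx.2)
  have i2 : IntervalIntegrable f volume 1 (14/5) :=
    II_aux 1 (14/5) (by norm_num) f _ (by fun_prop) (fun x hx => h2 x hx.1 hx.2)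
  have i3 : IntervalIntegrable f volume (14/5) 3 :=
    II_aux (14/5) 3 (by norm_num) f _ (by fun_prop) (fun x hx => h3 x hx.1 hx.2)
  have split : (∫ x in (0:ℝ)..3, f x)
      = (∫ x in (0:ℝ)..1, f x) + (∫ x in (1:ℝ)..(14/5), f x) + (∫ x in (14/5:ℝ)..3, f x) := by
    rw [← integral_add_adjacent_intervals i1 (i2.trans i3), ← integral_add_adjacent_intervals i2 i3]; ring
  have e1 : (∫ x in (0:ℝ)..1, f x) = ∫ x in (0:ℝ)..1, (3 - x^2/2) :=
    integral_congr (fun x hx => by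
      rw [Set.uIcc_of_le (by norm_num : (0:ℝ) ≤ 1)] at hx; exact h1 x hx.1 hx.2)
  have e2 : (∫ x in (1:ℝ)..(14/5), f x) = ∫ x in (1:ℝ)..(14/5), ((20 - 4*x - x^2)/6) :=
    integral_congr (fun x hx => by
      rw [Set.uIcc_of_le (by norm_num : (1:ℝ) ≤ 14/5)] at hx; exact h2 x hx.1 hx.2)
  have e3 : (∫ x in (14/5:ℝ)..3, f x) = ∫ x in (14/5:ℝ)..3, (4*(3 - x)^2) :=
    integral_congr (fun x hx => by
      rw [Set.uIcc_of_le (by norm_num : (14/5:ℝ) ≤ 3)] at hx; exact h3 x hx.1 hx.2)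
  have c1 : (∫ x in (0:ℝ)..1, (3 - x^2/2)) = 17/6 := by
    rw [poly_int 0 1 (fun x => 3*x - x^3/6) _ (fun x _ => by
      have h := ((hasDerivAt_id x).const_mul 3).sub ((hasDerivAt_pow 3 x).div_const 6)
      refine h.congr_deriv ?_; push_cast; ring) (by fun_prop)]
    norm_num
  have c2 : (∫ x in (1:ℝ)..(14/5), ((20 - 4*x - x^2)/6)) = 639/250 := by
    rw [poly_int 1 (14/5) (fun x => (20*x - 2*x^2 - x^3/3)/6) _ (fun x _ => by
      have h := ((((hasDerivAt_id x).const_mul 20).sub ((hasDerivAt_pow 2 x).const_mul 2)).sub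
        ((hasDerivAt_pow 3 x).div_const 3)).div_const 6
      refine h.congr_deriv ?_; push_cast; ring) (by fun_prop)]
    norm_num
  have c3 : (∫ x in (14/5:ℝ)..3, (4*(3 - x)^2)) = 4/375 := by
    rw [poly_int (14/5) 3 (fun x => -4/3*(3-x)^3) _ (fun x _ => by
      have h := (((hasDerivAt_id x).const_sub 3).pow 3).const_mul ((-4:ℝ)/3)
      simp only [id_eq] at h
      refine h.congr_deriv ?_; push_cast; ring) (by fun_prop)]
    norm_num
  rw [split, e1, e2, e3, c1, c2, c3]
  norm_num
end

section
/- Define f : ℝ → ℝ by f(x) = 3 − x²/2 for 0 ≤ x ≤ 2 and f(x) = 5 − 2x for 2 ≤ x ≤ 5/2. Then (1/3)·∫₀^{5/2} f(x) dx = 59/36, and 59/36 < 5/3. -/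
theorem stmt_9 (f : ℝ → ℝ)
    (h1 : ∀ x : ℝ, 0 ≤ x → x ≤ 2 → f x = 3 - x^2/2)
    (h2 : ∀ x : ℝ, 2 ≤ x → x ≤ 5/2 → f x = 5 - 2*x) :
    (1/3 : ℝ) * ∫ x in (0:ℝ)..(5/2), f x = 59/36 ∧ (59/36 : ℝ) < 5/3 := by
  constructor
  · have i1 : IntervalIntegrable f MeasureTheory.volume 0 2 := by
      refine (((by fun_prop : Continuous fun x : ℝ => 3 - x^2/2)).intervalIntegrable 0 2).congr ?_
      intro x hx
      rw [Set.uIoc_of_le (by norm_num)] at hx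
      exact (h1 x hx.1.le hx.2).symm
    have i2 : IntervalIntegrable f MeasureTheory.volume 2 (5/2) := by
      refine (((by fun_prop : Continuous fun x : ℝ => 5 - 2*x)).intervalIntegrable 2 (5/2)).congr ?_
      intro x hx
      rw [Set.uIoc_of_le (by norm_num)] at hx
      exact (h2 x hx.1.le hx.2).symm
    have hsplit : (∫ x in (0:ℝ)..(5/2), f x)
        = (∫ x in (0:ℝ)..(2:ℝ), f x) + (∫ x in (2:ℝ)..(5/2:ℝ), f x) :=
      (intervalIntegral.integral_add_adjacent_intervals i1 i2).symm
    have e1 : (∫ x in (0:ℝ)..(2:ℝ), f x) = ∫ x in (0:ℝ)..(2:ℝ), (3 - x^2/2) := by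
      apply intervalIntegral.integral_congr
      intro x hx
      rw [Set.uIcc_of_le (by norm_num)] at hx
      exact h1 x hx.1 hx.2
    have e2 : (∫ x in (2:ℝ)..(5/2:ℝ), f x) = ∫ x in (2:ℝ)..(5/2:ℝ), (5 - 2*x) := by
      apply intervalIntegral.integral_congr
      intro x hx
      rw [Set.uIcc_of_le (by norm_num)] at hx
      exact h2 x hx.1 hx.2
    have v1 : (∫ x in (0:ℝ)..(2:ℝ), (3 - x^2/2)) = 14/3 := by
      rw [intervalIntegral.integral_sub ((by fun_prop : Continuous fun _ : ℝ => (3:ℝ)).intervalIntegrable 0 2)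
        ((by fun_prop : Continuous fun x : ℝ => x^2/2).intervalIntegrable 0 2)]
      simp [intervalIntegral.integral_div, integral_pow]
      norm_num
    have v2 : (∫ x in (2:ℝ)..(5/2:ℝ), (5 - 2*x)) = 1/4 := by
      rw [intervalIntegral.integral_sub ((by fun_prop : Continuous fun _ : ℝ => (5:ℝ)).intervalIntegrable 2 (5/2))
        ((by fun_prop : Continuous fun x : ℝ => 2*x).intervalIntegrable 2 (5/2)),
        intervalIntegral.integral_const_mul, integral_id]
      simp
      norm_num
    rw [hsplit, e1, e2, v1, v2]
    norm_num
  · norm_num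
end

section
/- Define f : ℝ → ℝ by f(x) = 3 − x²/2 for 0 ≤ x ≤ 2, f(x) = (44 − 8x − 4x²)/12 for 2 ≤ x ≤ 17/7, and f(x) = 4(5−2x)² for 17/7 ≤ x ≤ 5/2. Then (1/3)·∫₀^{5/2} f(x) dx = 103/63, and 103/63 < 5/3. -/
lemma poly_int_s11 (a b p q r : ℝ) :
    ∫ x in a..b, (p + q*x + r*x^2) =
      (p*b + q*b^2/2 + r*b^3/3) - (p*a + q*a^2/2 + r*a^3/3) := by
  apply intervalIntegral.integral_eq_sub_of_hasDerivAt
  · intro x _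
    have h1 := (hasDerivAt_id x).const_mul p
    have h2 := ((hasDerivAt_pow 2 x).const_mul q).div_const 2
    have h3 := ((hasDerivAt_pow 3 x).const_mul r).div_const 3
    have := (h1.add h2).add h3
    convert this using 1
    · funext y; simp only [Pi.add_apply, id]
    · simp only [Nat.cast_ofNat, Nat.add_one_sub_one, pow_one]
      ring
  · apply Continuous.intervalIntegrable
    continuity

theorem stmt_11 (f : ℝ → ℝ)
    (h1 : ∀ x : ℝ, 0 ≤ x → x ≤ 2 → f x = 3 - x^2/2)
    (h2 : ∀ x : ℝ, 2 ≤ x → x ≤ 17/7 → f x = (44 - 8*x - 4*x^2) / 12)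
    (h3 : ∀ x : ℝ, 17/7 ≤ x → x ≤ 5/2 → f x = 4*(5 - 2*x)^2) :
    (1/3 : ℝ) * ∫ x in (0:ℝ)..(5/2), f x = 103/63 ∧ (103/63 : ℝ) < 5/3 := by
  have e1 : ∫ x in (0:ℝ)..2, f x = ∫ x in (0:ℝ)..2, (3 + 0*x + (-(1:ℝ)/2)*x^2) := by
    apply intervalIntegral.integral_congr
    intro x hx
    rw [Set.uIcc_of_le (by norm_num : (0:ℝ) ≤ 2)] at hx
    rw [h1 x hx.1 hx.2]; ring
  have e2 : ∫ x in (2:ℝ)..(17/7), f x =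
      ∫ x in (2:ℝ)..(17/7), ((44:ℝ)/12 + (-(8:ℝ)/12)*x + (-(4:ℝ)/12)*x^2) := by
    apply intervalIntegral.integral_congr
    intro x hx
    rw [Set.uIcc_of_le (by norm_num : (2:ℝ) ≤ 17/7)] at hx
    rw [h2 x hx.1 hx.2]; ring
  have e3 : ∫ x in (17/7:ℝ)..(5/2), f x =
      ∫ x in (17/7:ℝ)..(5/2), ((100:ℝ) + (-80:ℝ)*x + (16:ℝ)*x^2) := by
    apply intervalIntegral.integral_congr
    intro x hx
    rw [Set.uIcc_of_le (by norm_num : (17/7:ℝ) ≤ 5/2)] at hx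
    rw [h3 x hx.1 hx.2]; ring
  have int1 : IntervalIntegrable f MeasureTheory.volume 0 (2) := by
    have hc : IntervalIntegrable (fun x => 3 - x^2/2) MeasureTheory.volume 0 (2) := by
      apply Continuous.intervalIntegrable; fun_prop
    apply hc.congr
    intro x hx
    rw [Set.uIoc_of_le (by norm_num : (0:ℝ) ≤ 2)] at hx
    exact (h1 x hx.1.le hx.2).symm
  have int2 : IntervalIntegrable f MeasureTheory.volume 2 (17/7) := by
    have hc : IntervalIntegrable (fun x => (44 - 8*x - 4*x^2)/12) MeasureTheory.volume 2 (17/7) := by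
      apply Continuous.intervalIntegrable; fun_prop
    apply hc.congr
    intro x hx
    rw [Set.uIoc_of_le (by norm_num : (2:ℝ) ≤ 17/7)] at hx
    exact (h2 x hx.1.le hx.2).symm
  have int3 : IntervalIntegrable f MeasureTheory.volume (17/7) (5/2) := by
    have hc : IntervalIntegrable (fun x => 4*(5 - 2*x)^2) MeasureTheory.volume (17/7) (5/2) := by
      apply Continuous.intervalIntegrable; fun_prop
    apply hc.congr
    intro x hx
    rw [Set.uIoc_of_le (by norm_num : (17/7:ℝ) ≤ 5/2)] at hx
    exact (h3 x hx.1.le hx.2).symm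
  have split : ∫ x in (0:ℝ)..(5/2), f x =
      (∫ x in (0:ℝ)..2, f x) + (∫ x in (2:ℝ)..(17/7), f x) +
        (∫ x in (17/7:ℝ)..(5/2), f x) := by
    rw [intervalIntegral.integral_add_adjacent_intervals int1 int2,
      intervalIntegral.integral_add_adjacent_intervals (int1.trans int2) int3]
  constructor
  · rw [split, e1, e2, e3, poly_int_s11, poly_int_s11, poly_int_s11]
    norm_num
  · norm_num
end
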